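/- arXiv:2103.07288 — 6 statements merged into one kernel-verified Lean document; each statement's English description precedes it below -/
import Mathlib

section
/- Let H_L, E_L be diagonal m×m real matrices and H_R, E_R diagonal k×k real matrices, and let I_{R2L} ∈ ℝ^{m×k}, I_{L2R} ∈ ℝ^{k×m} satisfy the SBP-preserving property H_R I_{L2R} = I_{R2L}ᵀ H_L. Let u, w ∈ ℝᵐ, v, z ∈ ℝᵏ, and let δ_L, σ_L, δ_R, σ_R ∈ ℝ satisfy δ_L = −σ_R, σ_L = −δ_R, and δ_L + σ_L = −1. Then 2uᵀH_L E_L w − 2vᵀH_R E_R z + 2δ_L uᵀH_L (E_L w − I_{R2L} E_R z) + 2σ_L wᵀH_L E_L (u − I_{R2L} v) + 2δ_R vᵀH_R (E_R z − I_{L2R} E_L w) + 2σ_R zᵀH_R E_R (v − I_{L2R} u) = 0. -/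
open Matrix

private lemma diag_comm {n : ℕ} (A B : Matrix (Fin n) (Fin n) ℝ)
    (hA : A.IsDiag) (hB : B.IsDiag) : A * B = B * A := by
  ext i j
  by_cases h : i = j
  · subst h
    rw [Matrix.mul_apply, Matrix.mul_apply,
      Finset.sum_eq_single i (fun b _ hb => by rw [hA (Ne.symm hb), zero_mul]) (by simp),
      Finset.sum_eq_single i (fun b _ hb => by rw [hB (Ne.symm hb), zero_mul]) (by simp),
      mul_comm]
  · rw [Matrix.mul_apply, Matrix.mul_apply]
    refine (Finset.sum_eq_zero fun b _ => ?_).trans (Finset.sum_eq_zero fun b _ => ?_).symm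
    · rcases eq_or_ne i b with rfl | hb
      · rw [hB h, mul_zero]
      · rw [hA hb, zero_mul]
    · rcases eq_or_ne i b with rfl | hb
      · rw [hA h, mul_zero]
      · rw [hB hb, zero_mul]

private lemma dot_flip {a b : ℕ} (M : Matrix (Fin a) (Fin b) ℝ)
    (x : Fin a → ℝ) (y : Fin b → ℝ) : x ⬝ᵥ M *ᵥ y = y ⬝ᵥ Mᵀ *ᵥ x := by
  rw [Matrix.dotProduct_mulVec, ← Matrix.mulVec_transpose, dotProduct_comm]

/-- Viscous (diffusion) cancellation for the FD–FD interface coupling with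
penalty parameters `δL = −σR`, `σL = −δR`, `δL + σL = −1`. -/
theorem stmt_7 (m k : ℕ)
    (HL EL : Matrix (Fin m) (Fin m) ℝ) (hHL : HL.IsDiag) (hEL : EL.IsDiag)
    (HR ER : Matrix (Fin k) (Fin k) ℝ) (hHR : HR.IsDiag) (hER : ER.IsDiag)
    (IR2L : Matrix (Fin m) (Fin k) ℝ) (IL2R : Matrix (Fin k) (Fin m) ℝ)
    (hSBP : HR * IL2R = IR2Lᵀ * HL)
    (u w : Fin m → ℝ) (v z : Fin k → ℝ)
    (δL σL δR σR : ℝ)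
    (h1 : δL = -σR) (h2 : σL = -δR) (h3 : δL + σL = -1) :
    2 * (u ⬝ᵥ HL *ᵥ (EL *ᵥ w)) - 2 * (v ⬝ᵥ HR *ᵥ (ER *ᵥ z))
      + 2 * δL * (u ⬝ᵥ HL *ᵥ (EL *ᵥ w - IR2L *ᵥ (ER *ᵥ z)))
      + 2 * σL * (w ⬝ᵥ HL *ᵥ (EL *ᵥ (u - IR2L *ᵥ v)))
      + 2 * δR * (v ⬝ᵥ HR *ᵥ (ER *ᵥ z - IL2R *ᵥ (EL *ᵥ w)))
      + 2 * σR * (z ⬝ᵥ HR *ᵥ (ER *ᵥ (v - IL2R *ᵥ u))) = 0 := by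
  have hHLs : HLᵀ = HL := hHL.isSymm
  have hELs : ELᵀ = EL := hEL.isSymm
  have hHRs : HRᵀ = HR := hHR.isSymm
  have hERs : ERᵀ = ER := hER.isSymm
  -- symmetry of the diagonal bilinear forms
  have ha : w ⬝ᵥ HL *ᵥ (EL *ᵥ u) = u ⬝ᵥ HL *ᵥ (EL *ᵥ w) := by
    rw [Matrix.mulVec_mulVec, Matrix.mulVec_mulVec, dot_flip, Matrix.transpose_mul,
      hHLs, hELs, diag_comm EL HL hEL hHL]
  have hb : z ⬝ᵥ HR *ᵥ (ER *ᵥ v) = v ⬝ᵥ HR *ᵥ (ER *ᵥ z) := by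
    rw [Matrix.mulVec_mulVec, Matrix.mulVec_mulVec, dot_flip, Matrix.transpose_mul,
      hHRs, hERs, diag_comm ER HR hER hHR]
  -- cross terms via the SBP-preserving property
  have hSBP' : IL2Rᵀ * HR = HL * IR2L := by
    have := congrArg Matrix.transpose hSBP
    simpa [Matrix.transpose_mul, hHRs, hHLs] using this
  have hc : z ⬝ᵥ HR *ᵥ (ER *ᵥ (IL2R *ᵥ u)) = u ⬝ᵥ HL *ᵥ (IR2L *ᵥ (ER *ᵥ z)) := by
    rw [Matrix.mulVec_mulVec, Matrix.mulVec_mulVec, Matrix.mulVec_mulVec,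
      Matrix.mulVec_mulVec, dot_flip]
    congr 1
    rw [Matrix.transpose_mul, Matrix.transpose_mul, hHRs, hERs,
      Matrix.mul_assoc, diag_comm ER HR hER hHR, ← Matrix.mul_assoc, hSBP', Matrix.mul_assoc]
  have hd : v ⬝ᵥ HR *ᵥ (IL2R *ᵥ (EL *ᵥ w)) = w ⬝ᵥ HL *ᵥ (EL *ᵥ (IR2L *ᵥ v)) := by
    rw [Matrix.mulVec_mulVec, Matrix.mulVec_mulVec, Matrix.mulVec_mulVec,
      Matrix.mulVec_mulVec, dot_flip]
    congr 1
    rw [Matrix.transpose_mul, hELs, hSBP, Matrix.transpose_mul, Matrix.transpose_transpose,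
      hHLs, ← Matrix.mul_assoc, diag_comm EL HL hEL hHL]
  -- expand and finish by linear arithmetic
  simp only [Matrix.mulVec_sub, dotProduct_sub, Matrix.sub_mulVec]
  subst h1 h2
  rw [ha, hb, hc, hd]
  linear_combination (2 * (u ⬝ᵥ HL *ᵥ (EL *ᵥ w)) - 2 * (v ⬝ᵥ HR *ᵥ (ER *ᵥ z))) * h3
end

section
/- Let H_L be a symmetric m×m real matrix, M a symmetric k×k real matrix, and let I_{R2L} ∈ ℝ^{m×k}, I_{L2R} ∈ ℝ^{k×m} satisfy the SBP-preserving property M I_{L2R} = I_{R2L}ᵀ H_L. Let u, p, p̃ ∈ ℝᵐ with p = Diag(u) p̃, and v, q, q̃ ∈ ℝᵏ with q = Diag(v) q̃. Then [−uᵀH_L p − uᵀH_L Diag(u) p̃ + vᵀM q + (1/2)(vᵀM Diag(v) q̃ + (Diag(v) q̃)ᵀ M v)] + [uᵀH_L p − uᵀH_L I_{R2L} q] + [uᵀH_L Diag(u) p̃ − vᵀ I_{R2L}ᵀ H_L Diag(u) p̃] + [−(1/2)(vᵀM q + qᵀ M v) + vᵀM I_{L2R} p] + [−(1/2)(vᵀM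 Diag(v) q̃ + (Diag(v) q̃)ᵀ M v) + uᵀ I_{L2R}ᵀ M Diag(v) q̃] = 0. -/
open Matrix

lemma dot_swap {a b : ℕ} (A : Matrix (Fin a) (Fin b) ℝ) (x : Fin a → ℝ) (y : Fin b → ℝ) :
    x ⬝ᵥ A *ᵥ y = y ⬝ᵥ Aᵀ *ᵥ x := by
  rw [Matrix.dotProduct_mulVec, ← Matrix.mulVec_transpose, dotProduct_comm]

/-- Inviscid flux cancellation for the FD–FE interface coupling with the
nondiagonal FE interface mass matrix `M`. -/
theorem stmt_8 (m k : ℕ)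
    (HL : Matrix (Fin m) (Fin m) ℝ) (hHL : HLᵀ = HL)
    (M : Matrix (Fin k) (Fin k) ℝ) (hM : Mᵀ = M)
    (IR2L : Matrix (Fin m) (Fin k) ℝ) (IL2R : Matrix (Fin k) (Fin m) ℝ)
    (hSBP : M * IL2R = IR2Lᵀ * HL)
    (u p p' : Fin m → ℝ) (hp : p = Matrix.diagonal u *ᵥ p')
    (v q q' : Fin k → ℝ) (hq : q = Matrix.diagonal v *ᵥ q') :
    (-(u ⬝ᵥ HL *ᵥ p) - u ⬝ᵥ HL *ᵥ (Matrix.diagonal u *ᵥ p')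
        + v ⬝ᵥ M *ᵥ q
        + (1 / 2) * (v ⬝ᵥ M *ᵥ (Matrix.diagonal v *ᵥ q')
                      + (Matrix.diagonal v *ᵥ q') ⬝ᵥ M *ᵥ v))
    + (u ⬝ᵥ HL *ᵥ p - u ⬝ᵥ HL *ᵥ (IR2L *ᵥ q))
    + (u ⬝ᵥ HL *ᵥ (Matrix.diagonal u *ᵥ p')
        - v ⬝ᵥ IR2Lᵀ *ᵥ (HL *ᵥ (Matrix.diagonal u *ᵥ p')))
    + (-(1 / 2) * (v ⬝ᵥ M *ᵥ q + q ⬝ᵥ M *ᵥ v) + v ⬝ᵥ M *ᵥ (IL2R *ᵥ p))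
    + (-(1 / 2) * (v ⬝ᵥ M *ᵥ (Matrix.diagonal v *ᵥ q')
                      + (Matrix.diagonal v *ᵥ q') ⬝ᵥ M *ᵥ v)
        + u ⬝ᵥ IL2Rᵀ *ᵥ (M *ᵥ (Matrix.diagonal v *ᵥ q'))) = 0 := by
  have h1 : q ⬝ᵥ M *ᵥ v = v ⬝ᵥ M *ᵥ q := by rw [dot_swap, hM]
  have h2 : v ⬝ᵥ IR2Lᵀ *ᵥ (HL *ᵥ (Matrix.diagonal u *ᵥ p'))
      = v ⬝ᵥ M *ᵥ (IL2R *ᵥ p) := by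
    rw [Matrix.mulVec_mulVec, ← hSBP, hp, ← Matrix.mulVec_mulVec]
  have h3 : u ⬝ᵥ IL2Rᵀ *ᵥ (M *ᵥ (Matrix.diagonal v *ᵥ q'))
      = u ⬝ᵥ HL *ᵥ (IR2L *ᵥ q) := by
    rw [Matrix.mulVec_mulVec, hq, ← hM]
    have : IL2Rᵀ * Mᵀ = HL * IR2L := by
      rw [← Matrix.transpose_mul, hSBP, Matrix.transpose_mul, Matrix.transpose_transpose, hHL]
    rw [this, ← Matrix.mulVec_mulVec]
  rw [h1, h2, h3]
  ring
end

section
/- Let H_L, E_L be diagonal m×m real matrices, M a symmetric invertible k×k real matrix, and I_{R2L} ∈ ℝ^{m×k}, I_{L2R} ∈ ℝ^{k×m} with M I_{L2R} = I_{R2L}ᵀ H_L. Let u, w ∈ ℝᵐ, v, g ∈ ℝᵏ, and let δ_L, σ_L, δ_R, σ_R ∈ ℝ satisfy δ_L = −σ_R, σ_L = −δ_R, and δ_L + σ_L = −1. Then 2uᵀH_L E_L w + 2vᵀg + 2δ_L uᵀH_L (E_L w + I_{R2L} M⁻¹ g) + 2σ_L wᵀH_L E_L (u − I_{R2L} v)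 + 2δ_R vᵀ(−g − M I_{L2R} E_L w) − 2σ_R gᵀ(v − I_{L2R} u) = 0. -/
open Matrix

lemma sym_dot {n : ℕ} (S : Matrix (Fin n) (Fin n) ℝ) (hS : Sᵀ = S)
    (x y : Fin n → ℝ) : x ⬝ᵥ S *ᵥ y = y ⬝ᵥ S *ᵥ x := by
  rw [dotProduct_mulVec, ← mulVec_transpose, hS, dotProduct_comm]

/-- Viscous (diffusion) cancellation for the FD–FE interface coupling with
penalty parameters `δL = −σR`, `σL = −δR`, `δL + σL = −1`. -/
theorem stmt_10 (m k : ℕ)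
    (HL EL : Matrix (Fin m) (Fin m) ℝ) (hHL : HL.IsDiag) (hEL : EL.IsDiag)
    (M : Matrix (Fin k) (Fin k) ℝ) (hM : Mᵀ = M) (hMinv : IsUnit M.det)
    (IR2L : Matrix (Fin m) (Fin k) ℝ) (IL2R : Matrix (Fin k) (Fin m) ℝ)
    (hSBP : M * IL2R = IR2Lᵀ * HL)
    (u w : Fin m → ℝ) (v g : Fin k → ℝ)
    (δL σL δR σR : ℝ)
    (h1 : δL = -σR) (h2 : σL = -δR) (h3 : δL + σL = -1) :
    2 * (u ⬝ᵥ HL *ᵥ (EL *ᵥ w)) + 2 * (v ⬝ᵥ g)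
      + 2 * δL * (u ⬝ᵥ HL *ᵥ (EL *ᵥ w + IR2L *ᵥ (M⁻¹ *ᵥ g)))
      + 2 * σL * (w ⬝ᵥ HL *ᵥ (EL *ᵥ (u - IR2L *ᵥ v)))
      + 2 * δR * (v ⬝ᵥ (-g - M *ᵥ (IL2R *ᵥ (EL *ᵥ w))))
      - 2 * σR * (g ⬝ᵥ (v - IL2R *ᵥ u)) = 0 := by
  -- diagonal forms
  obtain ⟨dH, rfl⟩ : ∃ d, diagonal d = HL := ⟨HL.diag, hHL.diagonal_diag⟩
  obtain ⟨dE, rfl⟩ : ∃ d, diagonal d = EL := ⟨EL.diag, hEL.diagonal_diag⟩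
  have hHsym : (diagonal dH)ᵀ = diagonal dH := diagonal_transpose dH
  have hHE : diagonal dH * diagonal dE = diagonal dE * diagonal dH := by
    rw [diagonal_mul_diagonal, diagonal_mul_diagonal]
    ext i j
    rcases eq_or_ne i j with rfl | h
    · simp [mul_comm]
    · simp [diagonal_apply_ne _ h]
  have hHEsym : (diagonal dH * diagonal dE)ᵀ = diagonal dH * diagonal dE := by
    rw [transpose_mul, diagonal_transpose, diagonal_transpose, ← hHE]
  have hMi : (M⁻¹)ᵀ = M⁻¹ := by rw [transpose_nonsing_inv, hM]
  -- IL2R in terms of the rest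
  have hIL2R : IL2R = M⁻¹ * (IR2Lᵀ * diagonal dH) := by
    rw [← hSBP, ← Matrix.mul_assoc, nonsing_inv_mul M hMinv, Matrix.one_mul]
  -- key identity a
  have ha : u ⬝ᵥ diagonal dH *ᵥ (diagonal dE *ᵥ w)
      = w ⬝ᵥ diagonal dH *ᵥ (diagonal dE *ᵥ u) := by
    rw [mulVec_mulVec, mulVec_mulVec]
    exact sym_dot _ hHEsym u w
  -- key identity c : g ⬝ᵥ IL2R u = u ⬝ᵥ HL IR2L M⁻¹ g
  have hc : g ⬝ᵥ IL2R *ᵥ u = u ⬝ᵥ diagonal dH *ᵥ (IR2L *ᵥ (M⁻¹ *ᵥ g)) := by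
    rw [hIL2R, dotProduct_mulVec, ← mulVec_transpose, mulVec_mulVec, mulVec_mulVec,
      transpose_mul, transpose_mul, transpose_transpose, hHsym, hMi, dotProduct_comm,
      Matrix.mul_assoc]
  -- key identity d : w ⬝ᵥ HL EL (IR2L v) = v ⬝ᵥ M IL2R EL w
  have hd : w ⬝ᵥ diagonal dH *ᵥ (diagonal dE *ᵥ (IR2L *ᵥ v))
      = v ⬝ᵥ M *ᵥ (IL2R *ᵥ (diagonal dE *ᵥ w)) := by
    rw [mulVec_mulVec, mulVec_mulVec, mulVec_mulVec, mulVec_mulVec, hSBP,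
      dotProduct_mulVec, ← mulVec_transpose, transpose_mul, transpose_mul,
      diagonal_transpose, diagonal_transpose, ← hHE, ← Matrix.mul_assoc, dotProduct_comm]
  simp only [mulVec_add, mulVec_sub, dotProduct_add, dotProduct_sub, dotProduct_neg,
    sub_dotProduct, neg_sub]
  linear_combination (2 * (u ⬝ᵥ diagonal dH *ᵥ (diagonal dE *ᵥ w)) + 2 * (v ⬝ᵥ g)) * h3
    + (2 * (g ⬝ᵥ IL2R *ᵥ u) - 2 * (v ⬝ᵥ g)) * h1
    + (-2 * (w ⬝ᵥ diagonal dH *ᵥ (diagonal dE *ᵥ (IR2L *ᵥ v))) - 2 * (v ⬝ᵥ g)) * h2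
    - 2 * δL * hc - 2 * σL * ha + 2 * δR * hd + 2 * σR * (dotProduct_comm v g)
end

section
/- Let M_a, M_b, M_c be symmetric real matrices of sizes n_a×n_a, n_b×n_b, n_c×n_c, and let I_{a2b} ∈ ℝ^{n_b×n_a}, I_{b2a} ∈ ℝ^{n_a×n_b}, I_{b2c} ∈ ℝ^{n_c×n_b}, I_{c2b} ∈ ℝ^{n_b×n_c} satisfy the SBP-preserving properties M_b I_{a2b} = I_{b2a}ᵀ M_a and M_c I_{b2c} = I_{c2b}ᵀ M_b. Then the composed operators I_{a2c} = I_{b2c} I_{a2b} and I_{c2a} = I_{b2a} I_{c2b} again satisfy the SBP-preserving property M_c I_{a2c} = I_{c2a}ᵀ M_a. -/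
open Matrix

/-- Composition of SBP-preserving interpolation operator pairs is again
SBP-preserving. -/
theorem stmt_11 (na nb nc : ℕ)
    (Ma : Matrix (Fin na) (Fin na) ℝ) (hMa : Maᵀ = Ma)
    (Mb : Matrix (Fin nb) (Fin nb) ℝ) (hMb : Mbᵀ = Mb)
    (Mc : Matrix (Fin nc) (Fin nc) ℝ) (hMc : Mcᵀ = Mc)
    (Ia2b : Matrix (Fin nb) (Fin na) ℝ) (Ib2a : Matrix (Fin na) (Fin nb) ℝ)
    (Ib2c : Matrix (Fin nc) (Fin nb) ℝ) (Ic2b : Matrix (Fin nb) (Fin nc) ℝ)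
    (hab : Mb * Ia2b = Ib2aᵀ * Ma)
    (hbc : Mc * Ib2c = Ic2bᵀ * Mb) :
    Mc * (Ib2c * Ia2b) = (Ib2a * Ic2b)ᵀ * Ma := by
  rw [transpose_mul, ← Matrix.mul_assoc, hbc, Matrix.mul_assoc, hab, Matrix.mul_assoc]
end

section
/- Let H be an m×m real matrix, H_M an invertible k×k real matrix, M a symmetric k×k real matrix, and let I_{L2M} ∈ ℝ^{k×m}, I_{M2L} ∈ ℝ^{m×k} satisfy H_M I_{L2M} = I_{M2L}ᵀ H. Define I_{L2R} = I_{L2M} (composition with the identity map I_{M2R} = I_k) and I_{R2L} = I_{M2L} (M H_M⁻¹)ᵀ. Then M I_{L2R} = I_{R2L}ᵀ H, i.e., (I_{L2R}, I_{R2L}) is a pair of SBP-preserving interpolation operators with respect to the norms (H, M). -/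
open Matrix

/-- Construction of nondiagonal-norm SBP-preserving interpolation operators from
existing diagonal-norm ones via a middle layer: with `H_M I_{L2M} = I_{M2L}ᵀ H`,
the operators `I_{L2R} = I_{L2M}` and `I_{R2L} = I_{M2L} (M H_M⁻¹)ᵀ` satisfy
`M I_{L2R} = I_{R2L}ᵀ H`. -/
theorem stmt_12 (m k : ℕ)
    (H : Matrix (Fin m) (Fin m) ℝ)
    (HM : Matrix (Fin k) (Fin k) ℝ) (hHMinv : IsUnit HM.det)
    (M : Matrix (Fin k) (Fin k) ℝ) (hM : Mᵀ = M)
    (IL2M : Matrix (Fin k) (Fin m) ℝ) (IM2L : Matrix (Fin m) (Fin k) ℝ)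
    (hSBP : HM * IL2M = IM2Lᵀ * H) :
    let IL2R : Matrix (Fin k) (Fin m) ℝ := IL2M
    let IR2L : Matrix (Fin m) (Fin k) ℝ := IM2L * (M * HM⁻¹)ᵀ
    M * IL2R = IR2Lᵀ * H := by
  intro IL2R IR2L
  have : IR2Lᵀ * H = M * HM⁻¹ * (IM2Lᵀ * H) := by
    simp [IR2L, transpose_mul, hM, Matrix.mul_assoc]
  rw [this, ← hSBP, ← Matrix.mul_assoc, Matrix.mul_assoc M,
    Matrix.nonsing_inv_mul _ hHMinv, Matrix.mul_one]
end

section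
/- Let f : ℝ → ℝ be twice differentiable and α ∈ ℝ a constant such that α f(s) = (1 − α) s f'(s) for all s ∈ ℝ. Then for every differentiable function u : ℝ → ℝ and every x ∈ ℝ, −α [ (f∘u)'(x) · u(x) − f(u(x)) · u'(x) ] + (1 − α) · u(x)² · (f'∘u)'(x) = 0. -/
/-- The spatial-derivative-free condition `α f(s) = (1 − α) s f'(s)` is
sufficient for the pointwise skew-symmetry identity
`−α[(f(u))' u − f(u) u'] + (1 − α) u² (f'(u))' = 0`. -/
theorem stmt_14 (f : ℝ → ℝ)
    (hf : ∀ x : ℝ, DifferentiableAt ℝ f x)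
    (hf' : ∀ x : ℝ, DifferentiableAt ℝ (deriv f) x)
    (α : ℝ) (hsplit : ∀ s : ℝ, α * f s = (1 - α) * s * deriv f s)
    (u : ℝ → ℝ) (hu : ∀ x : ℝ, DifferentiableAt ℝ u x) (x : ℝ) :
    -α * (deriv (f ∘ u) x * u x - f (u x) * deriv u x)
      + (1 - α) * (u x) ^ 2 * deriv (deriv f ∘ u) x = 0 := by
  -- differentiate the splitting condition
  have hfun : (fun s : ℝ => α * f s) = fun s : ℝ => (1 - α) * s * deriv f s :=
    funext hsplit
  have hD : ∀ s : ℝ, α * deriv f s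
      = (1 - α) * deriv f s + (1 - α) * s * deriv (deriv f) s := by
    intro s
    have h1 : HasDerivAt (fun s : ℝ => α * f s) (α * deriv f s) s :=
      ((hf s).hasDerivAt).const_mul α
    have h2 : HasDerivAt (fun s : ℝ => (1 - α) * s * deriv f s)
        ((1 - α) * deriv f s + (1 - α) * s * deriv (deriv f) s) s := by
      have := (((hasDerivAt_id s).const_mul (1 - α)).mul ((hf' s).hasDerivAt))
      exact this.congr_deriv (by simp only [id]; ring)
    have h1' : HasDerivAt (fun s : ℝ => (1 - α) * s * deriv f s)
        (α * deriv f s) s := hfun ▸ h1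
    exact h1'.unique h2
  have hc1 : deriv (f ∘ u) x = deriv f (u x) * deriv u x :=
    deriv_comp x (hf (u x)) (hu x)
  have hc2 : deriv (deriv f ∘ u) x = deriv (deriv f) (u x) * deriv u x :=
    deriv_comp x (hf' (u x)) (hu x)
  have e1 := hsplit (u x)
  have e2 := hD (u x)
  rw [hc1, hc2]
  linear_combination (deriv u x) * e1 - (u x * deriv u x) * e2
end
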